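/- In the two-player lower-bound construction, there is a universal constant C > 0 such that the following holds whenever Φ satisfies Condition 2 and the algorithm interacts for T₀ ≤ √N / C rounds: for each i ∈ {1,2}, (a) E_{T ∼ Unif(𝒯_i)} [ P^{M_{T,0}}( {π^1, …, π^{T₀}} ∩ B*(T) ≠ ∅ ) ] ≤ 2T₀/q + 1/100; and (b) for every measurable set F of T₀-round histories, | P^{M₀}( history ∈ F ) − E_{T ∼ Unif(𝒯_i)} [ P^{M_{T,0}}( history ∈ F ) ] | ≤ 1/100. -/

import Mathlib

open Finset
open scoped Classical BigOperators

/-! ## The two-player zero-sum lower-bound construction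

Parameters: `ε ∈ (0,1)`, `N` a multiple of `3`, `n = q = 2N/ε`.  Player 1's
decisions are `Π₁ = [2n]` (encoded as `Fin (2n)`, with index `i < n`
representing coordinate `i+1 ∈ [n]` and index `i ≥ n` representing coordinate
`i+1 ∈ [n+1, 2n]`), player 2's decisions are `Π₂ = {0, 1, …, 2q}` (encoded
as `Fin (2q+1)`, with `0` the safe action, values `1, …, q` the range of the
codewords for `𝒯₁`-models and `q+1, …, 2q` the range for `𝒯₂`-models).
An observation is a pair of a reward index `j ∈ Fin 3` (decoding to the
deterministic zero-sum reward pairs `(0,0)`, `(1,−1)`, `(−δ, δ)` respectively,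
where `δ = 10⁻³`) and a pure observation `o∘ ∈ [N]`.  The encoding function `Φ`
is represented by `Φ₁ Φ₂ : Finset (Fin N) → Fin n → Fin q`, where for
`T ∈ 𝒯₁` (i.e. `T.card = N/3`) the codeword is `i ↦ Φ₁ T i` (with second
coordinate encoded as `(Φ₁ T i) + 1 ∈ {1, …, q}`), and for `T ∈ 𝒯₂`
(i.e. `T.card = 2N/3`) the codeword is `n + i ↦ q + 1 + Φ₂ T i`. -/

section TwoPlayerLB

variable (N n q : ℕ)

/-- The joint pure decision set `Π = Π₁ × Π₂`. -/
abbrev JointDec := Fin (2 * n) × Fin (2 * q + 1)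

/-- The observation space: a reward index and a pure observation in `[N]`. -/
abbrev LBObs (N : ℕ) := Fin 3 × Fin N

/-- Player 1's reward decoded from the reward index (`δ = 10⁻³`). -/
noncomputable def rdecode : Fin 3 → ℝ := ![0, 1, -(1 / 1000)]

variable (Φ₁ Φ₂ : Finset (Fin N) → Fin n → Fin q)

/-- Membership `π ∈ B*(T)`. -/
def inBstar (T : Finset (Fin N)) (π : JointDec n q) : Prop :=
  if T.card = N / 3 then
    ∃ i : Fin n, (π.1 : ℕ) = (i : ℕ) ∧ (π.2 : ℕ) = (Φ₁ T i : ℕ) + 1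
  else
    ∃ i : Fin n, (π.1 : ℕ) = n + (i : ℕ) ∧ (π.2 : ℕ) = q + 1 + (Φ₂ T i : ℕ)

/-- The deterministic reward index of the model `M_T` at decision `π`:
rewards `(0,0)` if `π₂ = 0`, `(−δ, δ)` if `π ∈ B*(T)`, and `(1, −1)` otherwise. -/
noncomputable def ridxT (T : Finset (Fin N)) (π : JointDec n q) : Fin 3 :=
  if (π.2 : ℕ) = 0 then 0 else if inBstar N n q Φ₁ Φ₂ T π then 2 else 1

/-- The reward index used by the models `M₀` and `M_{T,0}` (as if `B* = ∅`). -/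
noncomputable def ridx0 (π : JointDec n q) : Fin 3 :=
  if (π.2 : ℕ) = 0 then 0 else 1

/-- The model `M_T`: deterministic rewards given by `ridxT`, pure observation
uniform on `T`. -/
noncomputable def modelT (T : Finset (Fin N)) (π : JointDec n q) :
    LBObs N → ℝ :=
  fun o => if o.1 = ridxT N n q Φ₁ Φ₂ T π ∧ o.2 ∈ T then ((T.card : ℝ))⁻¹ else 0

/-- The model `M_{T,0}`: rewards of `M₀` (as if `B* = ∅`), pure observation
uniform on `T`. -/
noncomputable def modelT0 (T : Finset (Fin N)) (π : JointDec n q) :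
    LBObs N → ℝ :=
  fun o => if o.1 = ridx0 n q π ∧ o.2 ∈ T then ((T.card : ℝ))⁻¹ else 0

/-- The model `M₀`: rewards as if `B* = ∅`, pure observation uniform on `[N]`. -/
noncomputable def model0 (π : JointDec n q) : LBObs N → ℝ :=
  fun o => if o.1 = ridx0 n q π then ((N : ℝ))⁻¹ else 0

/-- Expected reward `f^M_k` of player `k ∈ {0,1}` (zero-sum: `f₂ = −f₁`) under a
kernel `M` at the pure decision `π`. -/
noncomputable def fLB (M : JointDec n q → LBObs N → ℝ) (k : Fin 2)
    (π : JointDec n q) : ℝ :=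
  ∑ o, M π o * (if k = 0 then rdecode o.1 else -rdecode o.1)

/-- The Nash gap `h^M(π) = Σ_{k=1,2} (max_{π'_k} f^M_k(π'_k, π_{−k}) − f^M_k(π))`. -/
noncomputable def gapLB (M : JointDec n q → LBObs N → ℝ) (π : JointDec n q) : ℝ :=
  ((⨆ a : Fin (2 * n), fLB N n q M 0 (a, π.2)) - fLB N n q M 0 π)
    + ((⨆ b : Fin (2 * q + 1), fLB N n q M 1 (π.1, b)) - fLB N n q M 1 π)

/-- The index set `𝒯₁ ∪ 𝒯₂` of the model class. -/
abbrev TIdx (N : ℕ) := {T : Finset (Fin N) // T.card = N / 3 ∨ T.card = 2 * N / 3}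

/-- The mixture model `Σ_T ν(T) · M_T` determined by `ν ∈ Δ(𝒯₁ ∪ 𝒯₂)`; the
elements of `co(M)` are exactly those mixtures. -/
noncomputable def mixT (ν : TIdx N → ℝ) (π : JointDec n q) : LBObs N → ℝ :=
  fun o => ∑ T : TIdx N, ν T * modelT N n q Φ₁ Φ₂ T.1 π o

/-- Squared Hellinger distance (`H² ∈ [0,2]` normalization). -/
noncomputable def hellSq {X : Type} [Fintype X] (p q : X → ℝ) : ℝ :=
  ∑ x, (Real.sqrt (p x) - Real.sqrt (q x)) ^ 2

/-- The offset DEC of the convexified lower-bound instance,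
`decoreg_γ(co(J)) = sup_{M̄ ∈ co(M)} inf_{p ∈ Δ(Π)} sup_{M ∈ co(M)}
  E_{π∼p}[ h^M(π) − γ·H²(M(π), M̄(π)) ]`. -/
noncomputable def decoregLB (γ : ℝ) : ℝ :=
  ⨆ νb : {v : TIdx N → ℝ // v ∈ stdSimplex ℝ (TIdx N)},
    ⨅ p : {p : JointDec n q → ℝ // p ∈ stdSimplex ℝ (JointDec n q)},
      ⨆ ν : {v : TIdx N → ℝ // v ∈ stdSimplex ℝ (TIdx N)},
        ∑ π, p.1 π *
          (gapLB N n q (mixT N n q Φ₁ Φ₂ ν.1) π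
            - γ * hellSq (mixT N n q Φ₁ Φ₂ ν.1 π) (mixT N n q Φ₁ Φ₂ νb.1 π))

/-- **Condition 1** (minimum distance): within each family `𝒯_i`, codewords of
distinct sets differ in at least `q − N + 1` of their `n` coordinates. -/
def Condition1 : Prop :=
  (∀ T T' : Finset (Fin N), T.card = N / 3 → T'.card = N / 3 → T ≠ T' →
    q - N + 1 ≤ (Finset.univ.filter fun i : Fin n => Φ₁ T i ≠ Φ₁ T' i).card) ∧
  (∀ T T' : Finset (Fin N), T.card = 2 * N / 3 → T'.card = 2 * N / 3 → T ≠ T' →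
    q - N + 1 ≤ (Finset.univ.filter fun i : Fin n => Φ₂ T i ≠ Φ₂ T' i).card)

/-- **Condition 2** (near-uniformity of codeword symbols conditioned on any small
set `Q` being contained in `T`): `P_{T ∼ Unif(𝒯_i)}(Φ(T)(a₁) = a₂ | Q ⊆ T) ≤ 2/q`
(stated in cross-multiplied form). -/
def Condition2 : Prop :=
  (∀ Q : Finset (Fin N), (Q.card : ℝ) ≤ Real.sqrt N →
    ∀ (a₁ : Fin n) (a₂ : Fin q),
      ((Finset.univ.filter fun T : Finset (Fin N) =>
          T.card = N / 3 ∧ Q ⊆ T ∧ Φ₁ T a₁ = a₂).card : ℝ) ≤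
        (2 / (q : ℝ)) *
          ((Finset.univ.filter fun T : Finset (Fin N) =>
            T.card = N / 3 ∧ Q ⊆ T).card : ℝ)) ∧
  (∀ Q : Finset (Fin N), (Q.card : ℝ) ≤ Real.sqrt N →
    ∀ (a₁ : Fin n) (a₂ : Fin q),
      ((Finset.univ.filter fun T : Finset (Fin N) =>
          T.card = 2 * N / 3 ∧ Q ⊆ T ∧ Φ₂ T a₁ = a₂).card : ℝ) ≤
        (2 / (q : ℝ)) *
          ((Finset.univ.filter fun T : Finset (Fin N) =>
            T.card = 2 * N / 3 ∧ Q ⊆ T).card : ℝ))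

end TwoPlayerLB

section Algorithms

/-- An algorithm interacting for `T₀` rounds with decision set `P` and
observation set `O`: at round `t` it plays a randomized decision depending on
the history of the first `t` rounds, and after `T₀` rounds it outputs a
randomized decision. -/
structure LBAlg (P O : Type) (T₀ : ℕ) where
  dec : (t : ℕ) → (Fin t → P × O) → P → ℝ
  out : (Fin T₀ → P × O) → P → ℝ

/-- The randomization at every round, and for the output, is a valid probability
distribution. -/
def LBAlg.Valid {P O : Type} [Fintype P] {T₀ : ℕ} (alg : LBAlg P O T₀) : Prop :=
  (∀ (t : ℕ) (h : Fin t → P × O), alg.dec t h ∈ stdSimplex ℝ P) ∧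
  (∀ h : Fin T₀ → P × O, alg.out h ∈ stdSimplex ℝ P)

/-- Probability that the interaction of the algorithm `alg` with the true model
(kernel) `M` produces exactly the `T₀`-round history `h`. -/
noncomputable def algProbHist {P O : Type} [Fintype P] [Fintype O] {T₀ : ℕ}
    (alg : LBAlg P O T₀) (M : P → O → ℝ) (h : Fin T₀ → P × O) : ℝ :=
  ∏ t : Fin T₀,
    alg.dec t.1 (fun s => h ⟨s.1, s.2.trans t.2⟩) (h t).1 * M (h t).1 (h t).2

/-- Probability, under the interaction of `alg` with the model `M`, of an event
`E` over `T₀`-round histories. -/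
noncomputable def algProbEvent {P O : Type} [Fintype P] [Fintype O] {T₀ : ℕ}
    (alg : LBAlg P O T₀) (M : P → O → ℝ) (E : Set (Fin T₀ → P × O)) : ℝ :=
  ∑ h : Fin T₀ → P × O, if h ∈ E then algProbHist alg M h else 0

/-- Probability, under the interaction of `alg` with the model `M`, that the
output decision `π̂` lies in `E ⊆ P`. -/
noncomputable def algProbOut {P O : Type} [Fintype P] [Fintype O] {T₀ : ℕ}
    (alg : LBAlg P O T₀) (M : P → O → ℝ) (E : Set P) : ℝ :=
  ∑ h : Fin T₀ → P × O, algProbHist alg M h *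
    ∑ p : P, if p ∈ E then alg.out h p else 0

/-- Expectation, under the interaction of `alg` with the model `M`, of a function
`φ` of the output decision `π̂`. -/
noncomputable def algExpOut {P O : Type} [Fintype P] [Fintype O] {T₀ : ℕ}
    (alg : LBAlg P O T₀) (M : P → O → ℝ) (φ : P → ℝ) : ℝ :=
  ∑ h : Fin T₀ → P × O, algProbHist alg M h * ∑ p : P, alg.out h p * φ p

end Algorithms

/-! ### Auxiliary lemmas -/


def snocE (T : ℕ) (X : Type) : ((Fin T → X) × X) ≃ (Fin (T+1) → X) where
  toFun p := Fin.snoc p.1 p.2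
  invFun f := (fun i => f i.castSucc, f (Fin.last T))
  left_inv p := by ext i <;> simp
  right_inv f := by
    funext i
    refine Fin.lastCases ?_ ?_ i
    · simp
    · intro j; simp

lemma snocE_lt (T : ℕ) (X : Type) (g : Fin T → X) (x : X) (v : ℕ) (hv : v < T)
    (hv' : v < T + 1) : snocE T X (g, x) ⟨v, hv'⟩ = g ⟨v, hv⟩ := by
  have h : (⟨v, hv'⟩ : Fin (T+1)) = Fin.castSucc ⟨v, hv⟩ := rfl
  show (Fin.snoc g x : Fin (T+1) → X) ⟨v, hv'⟩ = g ⟨v, hv⟩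
  rw [h, Fin.snoc_castSucc]

lemma snocE_last (T : ℕ) (X : Type) (g : Fin T → X) (x : X) (hv : (T:ℕ) < T + 1) :
    snocE T X (g, x) ⟨T, hv⟩ = x := by
  have h : (⟨T, hv⟩ : Fin (T+1)) = Fin.last T := rfl
  show (Fin.snoc g x : Fin (T+1) → X) ⟨T, hv⟩ = x
  rw [h, Fin.snoc_last]

lemma seq_sum_one {X : Type} [Fintype X] :
    ∀ (T₀ : ℕ) (d : (t : ℕ) → (Fin t → X) → X → ℝ),
    (∀ t h, ∑ x, d t h x = 1) →
    ∑ f : Fin T₀ → X, ∏ t : Fin T₀, d t.1 (fun s => f ⟨s.1, s.2.trans t.2⟩) (f t) = 1 := by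
  intro T₀
  induction T₀ with
  | zero => intro d hd; simp
  | succ T ih =>
    intro d hd
    rw [← Equiv.sum_comp (snocE T X)
      (fun f => ∏ t : Fin (T+1), d t.1 (fun s => f ⟨s.1, s.2.trans t.2⟩) (f t))]
    rw [Fintype.sum_prod_type]
    have key : ∀ (g : Fin T → X) (x : X),
        (∏ t : Fin (T+1), d t.1
          (fun s => snocE T X (g, x) ⟨s.1, s.2.trans t.2⟩) (snocE T X (g, x) t)) =
        (∏ t : Fin T, d t.1 (fun s => g ⟨s.1, s.2.trans t.2⟩) (g t)) * d T g x := by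
      intro g x
      rw [Fin.prod_univ_castSucc]
      congr 1
      · apply Finset.prod_congr rfl
        intro t _
        have h2 : snocE T X (g, x) t.castSucc = g t := by
          refine (snocE_lt T X g x t.1 t.2 _).trans ?_
          congr 1
        have h1 : (fun s : Fin ((t.castSucc : Fin (T+1)) : ℕ) =>
            snocE T X (g, x) ⟨s.1, s.2.trans (t.castSucc).2⟩)
            = (fun s => g ⟨s.1, s.2.trans t.2⟩) := by
          funext s
          exact snocE_lt T X g x s.1 (s.2.trans t.2) _
        rw [h2]
        exact congrArg (fun z => d _ z (g t)) h1
      · have h4 : snocE T X (g, x) (Fin.last T) = x := snocE_last T X g x _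
        have h3 : (fun s : Fin ((Fin.last T : Fin (T+1)) : ℕ) =>
            snocE T X (g, x) ⟨s.1, s.2.trans (Fin.last T).2⟩)
            = (fun s : Fin T => g s) := by
          funext s
          exact (snocE_lt T X g x s.1 s.2 _).trans (by congr)
        rw [h4]
        exact congrArg (fun z => d _ z x) h3
    calc (∑ g : Fin T → X, ∑ x : X, ∏ t : Fin (T+1), d t.1
            (fun s => snocE T X (g, x) ⟨s.1, s.2.trans t.2⟩) (snocE T X (g, x) t))
        = ∑ g : Fin T → X, (∏ t : Fin T, d t.1 (fun s => g ⟨s.1, s.2.trans t.2⟩) (g t)) * 1 := by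
          apply Finset.sum_congr rfl
          intro g _
          rw [← hd T g, Finset.mul_sum]
          exact Finset.sum_congr rfl (fun x _ => key g x)
      _ = 1 := by
          simp only [mul_one]
          exact ih (fun t h => d t h) hd


lemma sum_fun_prod {X : Type} [Fintype X] (k : ℕ) (f : X → ℝ) :
    ∑ ω : Fin k → X, ∏ t, f (ω t) = (∑ x, f x)^k := by
  induction k with
  | zero => simp
  | succ k ih =>
    rw [← Equiv.sum_comp (snocE k X) (fun ω => ∏ t, f (ω t)), Fintype.sum_prod_type]
    have key : ∀ (g : Fin k → X) (x : X),
        (∏ t : Fin (k+1), f ((snocE k X (g, x)) t)) = (∏ t, f (g t)) * f x := by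
      intro g x
      rw [Fin.prod_univ_castSucc]
      congr 1
      · apply Finset.prod_congr rfl
        intro t _
        show f ((Fin.snoc g x : Fin (k+1) → X) t.castSucc) = f (g t)
        rw [Fin.snoc_castSucc]
      · show f ((Fin.snoc g x : Fin (k+1) → X) (Fin.last k)) = f x
        rw [Fin.snoc_last]
    calc (∑ g : Fin k → X, ∑ x : X, ∏ t : Fin (k+1), f ((snocE k X (g, x)) t))
        = ∑ g : Fin k → X, (∏ t, f (g t)) * (∑ x, f x) := by
          apply Finset.sum_congr rfl
          intro g _
          rw [Finset.mul_sum]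
          exact Finset.sum_congr rfl (fun x _ => key g x)
      _ = (∑ x, f x)^(k+1) := by
          rw [← Finset.sum_mul, ih, pow_succ]

lemma card_Tm {N : ℕ} (m : ℕ) :
    (univ.filter fun T : Finset (Fin N) => T.card = m).card = N.choose m := by
  have h1 : (univ.filter fun T : Finset (Fin N) => T.card = m)
      = Finset.powersetCard m (univ : Finset (Fin N)) := by
    rw [Finset.powersetCard_eq_filter, Finset.powerset_univ]
  rw [h1, Finset.card_powersetCard, Finset.card_univ, Fintype.card_fin]


lemma descFac_sub (M : ℕ) : ∀ k, k ≤ M →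
    (M:ℝ)^k - (M.descFactorial k : ℝ) ≤ ((k:ℝ)*((k:ℝ)-1))/2 * (M:ℝ)^(k-1) := by
  intro k
  induction k with
  | zero => intro _; simp
  | succ k ih =>
    intro hk
    have hkM : k ≤ M := Nat.le_of_succ_le hk
    have hdf : (M.descFactorial (k+1) : ℝ) = ((M:ℝ) - k) * (M.descFactorial k : ℝ) := by
      rw [Nat.descFactorial_succ]
      push_cast [Nat.cast_sub hkM]
      ring
    have hle : (M.descFactorial k : ℝ) ≤ (M:ℝ)^k := by
      exact_mod_cast Nat.descFactorial_le_pow M k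
    have hM0 : (0:ℝ) ≤ M := Nat.cast_nonneg M
    have step : (M:ℝ)^(k+1) - (M.descFactorial (k+1) : ℝ)
        = (M:ℝ) * ((M:ℝ)^k - (M.descFactorial k : ℝ)) + (k:ℝ) * (M.descFactorial k : ℝ) := by
      rw [hdf, pow_succ]; ring
    rcases Nat.eq_zero_or_pos k with hk0 | hk1
    · subst hk0; simp
    · have hpow : (M:ℝ) * (M:ℝ)^(k-1) = (M:ℝ)^k := by
        rw [← pow_succ']
        congr 1
        omega
      have h1 : (M:ℝ) * ((M:ℝ)^k - (M.descFactorial k : ℝ))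
          ≤ ((k:ℝ)*((k:ℝ)-1))/2 * (M:ℝ)^k := by
        calc (M:ℝ) * ((M:ℝ)^k - (M.descFactorial k : ℝ))
            ≤ (M:ℝ) * (((k:ℝ)*((k:ℝ)-1))/2 * (M:ℝ)^(k-1)) := by
              apply mul_le_mul_of_nonneg_left (ih hkM) hM0
          _ = ((k:ℝ)*((k:ℝ)-1))/2 * ((M:ℝ) * (M:ℝ)^(k-1)) := by ring
          _ = ((k:ℝ)*((k:ℝ)-1))/2 * (M:ℝ)^k := by rw [hpow]
      have h2 : (k:ℝ) * (M.descFactorial k : ℝ) ≤ (k:ℝ) * (M:ℝ)^k :=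
        mul_le_mul_of_nonneg_left hle (Nat.cast_nonneg k)
      rw [step]
      have : ((k:ℝ)*((k:ℝ)-1))/2 * (M:ℝ)^k + (k:ℝ) * (M:ℝ)^k
          = (((k:ℝ)+1)*(((k:ℝ)+1)-1))/2 * (M:ℝ)^k := by ring
      calc (M:ℝ) * ((M:ℝ)^k - (M.descFactorial k : ℝ)) + (k:ℝ) * (M.descFactorial k : ℝ)
          ≤ ((k:ℝ)*((k:ℝ)-1))/2 * (M:ℝ)^k + (k:ℝ) * (M:ℝ)^k := add_le_add h1 h2
        _ = (((k:ℝ)+1)*(((k:ℝ)+1)-1))/2 * (M:ℝ)^k := this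
        _ = (((k+1:ℕ):ℝ)*(((k+1:ℕ):ℝ)-1))/2 * (M:ℝ)^((k+1)-1) := by push_cast; ring_nf
  
lemma descFac_inv_nonneg (M k : ℕ) (hM : 0 < M) :
    0 ≤ 1 - (M.descFactorial k : ℝ) * ((M:ℝ)⁻¹)^k := by
  have hMR : (0:ℝ) < M := by exact_mod_cast hM
  have h1 : (1:ℝ) = (M:ℝ)^k * ((M:ℝ)⁻¹)^k := by
    rw [← mul_pow, mul_inv_cancel₀ (ne_of_gt hMR), one_pow]
  rw [h1, ← sub_mul]
  apply mul_nonneg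
  · have : (M.descFactorial k : ℝ) ≤ (M:ℝ)^k := by exact_mod_cast Nat.descFactorial_le_pow M k
    linarith
  · positivity

lemma one_sub_descFac (M k : ℕ) (h : k ≤ M) (hM : 0 < M) :
    1 - (M.descFactorial k : ℝ) * ((M:ℝ)⁻¹)^k ≤ (k:ℝ)^2 / (2*M) := by
  have hMR : (0:ℝ) < M := by exact_mod_cast hM
  have h1 : (1:ℝ) = (M:ℝ)^k * ((M:ℝ)⁻¹)^k := by
    rw [← mul_pow, mul_inv_cancel₀ (ne_of_gt hMR), one_pow]
  rw [h1, ← sub_mul]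
  rcases Nat.eq_zero_or_pos k with hk0 | hk1
  · subst hk0; simp
  · have hmain := descFac_sub M k h
    have hinv : (0:ℝ) ≤ ((M:ℝ)⁻¹)^k := by positivity
    calc ((M:ℝ)^k - (M.descFactorial k : ℝ)) * ((M:ℝ)⁻¹)^k
        ≤ (((k:ℝ)*((k:ℝ)-1))/2 * (M:ℝ)^(k-1)) * ((M:ℝ)⁻¹)^k :=
          mul_le_mul_of_nonneg_right hmain hinv
      _ = ((k:ℝ)*((k:ℝ)-1))/2 * ((M:ℝ)^(k-1) * ((M:ℝ)⁻¹)^k) := by ring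
      _ ≤ (k:ℝ)^2 / (2*M) := by
          have hpk : (M:ℝ)^(k-1) * ((M:ℝ)⁻¹)^k = (M:ℝ)⁻¹ := by
            have hk' : k = (k-1) + 1 := by omega
            rw [hk', pow_succ ((M:ℝ)⁻¹)]
            rw [show (k-1+1)-1 = k-1 from by omega]
            rw [← mul_assoc, ← mul_pow, mul_inv_cancel₀ (ne_of_gt hMR), one_pow, one_mul]
          rw [hpk, le_div_iff₀ (by positivity : (0:ℝ) < 2*(M:ℝ))]
          have h4 : (k:ℝ)*((k:ℝ)-1)/2*(M:ℝ)⁻¹*(2*(M:ℝ)) = (k:ℝ)*((k:ℝ)-1)*((M:ℝ)⁻¹*(M:ℝ)) := by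
            ring
          rw [h4, inv_mul_cancel₀ (ne_of_gt hMR), mul_one]
          nlinarith [Nat.cast_nonneg (α := ℝ) k]


lemma card_supersets {N : ℕ} (m : ℕ) (S : Finset (Fin N)) (hS : S.card ≤ m) :
    (univ.filter fun T : Finset (Fin N) => T.card = m ∧ S ⊆ T).card
      = (N - S.card).choose (m - S.card) := by
  have : (univ.filter fun T : Finset (Fin N) => T.card = m ∧ S ⊆ T).card
      = (Finset.powersetCard (m - S.card) Sᶜ).card := by
    apply Finset.card_bij' (fun T _ => T \ S) (fun A _ => A ∪ S)
    · intro T hT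
      simp only [mem_filter, mem_univ, true_and] at hT
      rw [Finset.mem_powersetCard]
      constructor
      · intro x hx
        simp only [Finset.mem_sdiff] at hx
        simp [Finset.mem_compl, hx.2]
      · rw [Finset.card_sdiff_of_subset hT.2, hT.1]
    · intro A hA
      rw [Finset.mem_powersetCard] at hA
      have hdisj : Disjoint A S := by
        rw [Finset.disjoint_left]
        intro x hx
        have := hA.1 hx
        simp only [Finset.mem_compl] at this
        exact this
      simp only [mem_filter, mem_univ, true_and]
      constructor
      · rw [Finset.card_union_of_disjoint hdisj, hA.2]
        omega
      · exact Finset.subset_union_right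
    · intro T hT
      simp only [mem_filter, mem_univ, true_and] at hT
      exact Finset.sdiff_union_of_subset hT.2
    · intro A hA
      rw [Finset.mem_powersetCard] at hA
      have hdisj : Disjoint A S := by
        rw [Finset.disjoint_left]
        intro x hx
        have := hA.1 hx
        simp only [Finset.mem_compl] at this
        exact this
      rw [Finset.union_sdiff_cancel_right hdisj]
  rw [this, Finset.card_powersetCard, Finset.card_compl]
  simp

lemma choose_ratio : ∀ (k N m : ℕ), k ≤ m → m ≤ N →
    (N-k).choose (m-k) * N^k ≤ N.choose m * m^k := by
  intro k
  induction k with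
  | zero => intro N m _ _; simp
  | succ k ih =>
    intro N m hk hm
    have hk' : k ≤ m := Nat.le_of_succ_le hk
    have hkN : k < N := lt_of_lt_of_le hk hm
    have hNk : 0 < N - k := by omega
    -- (N-k) * (N-k-1).choose (m-k-1) = (N-k).choose (m-k) * (m-k)
    have hid : (N - k) * (N - k - 1).choose (m - k - 1) = (N-k).choose (m-k) * (m-k) := by
      have h1 := Nat.add_one_mul_choose_eq (N - k - 1) (m - k - 1)
      have e1 : (N - k - 1) + 1 = N - k := by omega
      have e2 : (m - k - 1) + 1 = m - k := by omega
      rw [e1, e2] at h1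
      exact h1
    -- goal: (N-(k+1)).choose (m-(k+1)) * N^(k+1) ≤ N.choose m * m^(k+1)
    have e3 : N - (k+1) = N - k - 1 := by omega
    have e4 : m - (k+1) = m - k - 1 := by omega
    rw [e3, e4]
    apply Nat.le_of_mul_le_mul_left _ hNk
    calc (N - k) * ((N-k-1).choose (m-k-1) * N^(k+1))
        = ((N - k) * (N-k-1).choose (m-k-1)) * N^(k+1) := by ring
      _ = ((N-k).choose (m-k) * (m-k)) * N^(k+1) := by rw [hid]
      _ = ((N-k).choose (m-k) * N^k) * ((m-k) * N) := by ring
      _ ≤ (N.choose m * m^k) * ((N-k) * m) := by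
          apply Nat.mul_le_mul (ih N m hk' hm)
          -- (m-k)*N ≤ (N-k)*m
          have : (m-k)*N ≤ (N-k)*m := by
            have h5 : k ≤ m := hk'
            have h6 : k*m ≤ k*N := Nat.mul_le_mul_left k hm
            calc (m-k)*N = m*N - k*N := by rw [Nat.sub_mul]
              _ ≤ m*N - k*m := by omega
              _ = (N-k)*m := by rw [Nat.sub_mul]; rw [Nat.mul_comm m N]
          exact this
      _ = (N - k) * (N.choose m * m^(k+1)) := by ring
  
lemma card_inj_into {N : ℕ} (k : ℕ) (T : Finset (Fin N)) :
    (univ.filter fun ω : Fin k → Fin N =>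
      Function.Injective ω ∧ ∀ t, ω t ∈ T).card = T.card.descFactorial k := by
  have e : {ω : Fin k → Fin N // Function.Injective ω ∧ ∀ t, ω t ∈ T}
      ≃ (Fin k ↪ {x : Fin N // x ∈ T}) := by
    refine ⟨fun ω => ⟨fun t => ⟨ω.1 t, ω.2.2 t⟩, ?_⟩,
        fun e => ⟨fun t => (e t).1, ?_, fun t => (e t).2⟩, ?_, ?_⟩
    · intro a b hab
      apply ω.2.1
      simpa [Subtype.ext_iff] using hab
    · intro a b hab
      exact e.injective (Subtype.ext hab)
    · intro ω; rfl
    · intro f; ext t; rfl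
  have h1 : (univ.filter fun ω : Fin k → Fin N =>
      Function.Injective ω ∧ ∀ t, ω t ∈ T).card
      = Fintype.card {ω : Fin k → Fin N // Function.Injective ω ∧ ∀ t, ω t ∈ T} := by
    rw [Fintype.card_subtype]
  rw [h1, Fintype.card_congr e, Fintype.card_embedding_eq]
  congr 1 <;> simp


lemma sum_W {P : Type} [Fintype P] {N : ℕ} (hN : 0 < N) (T₀ : ℕ)
    (dec : (t : ℕ) → (Fin t → P × (Fin 3 × Fin N)) → P → ℝ) (ridx : P → Fin 3)
    (hdec : ∀ t h, dec t h ∈ stdSimplex ℝ P)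
    (φ : (Fin T₀ → Fin N) → ℝ) :
    ∑ h : Fin T₀ → P × (Fin 3 × Fin N),
      (∏ t : Fin T₀, dec t.1 (fun s => h ⟨s.1, s.2.trans t.2⟩) (h t).1 *
        (if (h t).2.1 = ridx (h t).1 then (1:ℝ) else 0)) * φ (fun t => (h t).2.2)
    = ∑ ω : Fin T₀ → Fin N, φ ω := by
  classical
  let E : ((Fin T₀ → P × Fin 3) × (Fin T₀ → Fin N)) ≃ (Fin T₀ → P × (Fin 3 × Fin N)) :=
    { toFun := fun p t => ((p.1 t).1, ((p.1 t).2, p.2 t))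
      invFun := fun h => (fun t => ((h t).1, (h t).2.1), fun t => (h t).2.2)
      left_inv := fun p => by ext t <;> rfl
      right_inv := fun h => by funext t; rfl }
  rw [← Equiv.sum_comp E (fun h => (∏ t : Fin T₀,
      dec t.1 (fun s => h ⟨s.1, s.2.trans t.2⟩) (h t).1 *
        (if (h t).2.1 = ridx (h t).1 then (1:ℝ) else 0)) * φ (fun t => (h t).2.2))]
  rw [Fintype.sum_prod_type_right]
  apply Finset.sum_congr rfl
  intro ω _
  set ωf : ℕ → Fin N := fun i => if h : i < T₀ then ω ⟨i, h⟩ else ⟨0, hN⟩ with hωf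
  have key : ∑ g : Fin T₀ → P × Fin 3, (∏ t : Fin T₀,
      dec t.1 (fun s => (E (g, ω)) ⟨s.1, s.2.trans t.2⟩) ((E (g, ω)) t).1 *
        (if ((E (g, ω)) t).2.1 = ridx ((E (g, ω)) t).1 then (1:ℝ) else 0)) = 1 := by
    have hone := seq_sum_one T₀ (fun (t : ℕ) (hist : Fin t → P × Fin 3) (x : P × Fin 3) =>
      dec t (fun s => ((hist s).1, ((hist s).2, ωf s.1))) x.1 *
        (if x.2 = ridx x.1 then (1:ℝ) else 0))
      (by
        intro t h
        rw [Fintype.sum_prod_type]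
        have hp : ∀ p : P, ∑ j : Fin 3,
            dec t (fun s => ((h s).1, ((h s).2, ωf s.1))) p *
              (if j = ridx p then (1:ℝ) else 0)
            = dec t (fun s => ((h s).1, ((h s).2, ωf s.1))) p := by
          intro p
          rw [← Finset.mul_sum]
          simp
        rw [Finset.sum_congr rfl (fun p _ => hp p)]
        exact (hdec t _).2)
    have hstep : (∑ g : Fin T₀ → P × Fin 3, (∏ t : Fin T₀,
        dec t.1 (fun s => (E (g, ω)) ⟨s.1, s.2.trans t.2⟩) ((E (g, ω)) t).1 *
          (if ((E (g, ω)) t).2.1 = ridx ((E (g, ω)) t).1 then (1:ℝ) else 0)))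
        = ∑ f : Fin T₀ → P × Fin 3, ∏ t : Fin T₀,
          (fun (t : ℕ) (hist : Fin t → P × Fin 3) (x : P × Fin 3) =>
            dec t (fun s => ((hist s).1, ((hist s).2, ωf s.1))) x.1 *
              (if x.2 = ridx x.1 then (1:ℝ) else 0)) t.1 (fun s => f ⟨s.1, s.2.trans t.2⟩) (f t) := by
      apply Finset.sum_congr rfl
      intro g _
      apply Finset.prod_congr rfl
      intro t _
      have h1 : (fun s : Fin t.1 => (E (g, ω)) ⟨s.1, s.2.trans t.2⟩)
          = (fun s : Fin t.1 => ((g ⟨s.1, s.2.trans t.2⟩).1,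
              ((g ⟨s.1, s.2.trans t.2⟩).2, ωf s.1))) := by
        funext s
        show ((g ⟨s.1, s.2.trans t.2⟩).1,
            ((g ⟨s.1, s.2.trans t.2⟩).2, ω ⟨s.1, s.2.trans t.2⟩)) = _
        have hc : ωf s.1 = ω ⟨s.1, s.2.trans t.2⟩ := dif_pos (s.2.trans t.2)
        rw [hc]
      show dec t.1 (fun s => (E (g, ω)) ⟨s.1, s.2.trans t.2⟩) ((E (g, ω)) t).1 *
          (if ((E (g, ω)) t).2.1 = ridx ((E (g, ω)) t).1 then (1:ℝ) else 0)
        = dec t.1 (fun s : Fin t.1 => ((g ⟨s.1, s.2.trans t.2⟩).1,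
              ((g ⟨s.1, s.2.trans t.2⟩).2, ωf s.1))) (g t).1 *
          (if ((E (g, ω)) t).2.1 = ridx ((E (g, ω)) t).1 then (1:ℝ) else 0)
      rw [h1]
      rfl
    rw [hstep]
    exact hone
  have hφ : ∀ g : Fin T₀ → P × Fin 3,
      φ (fun t => ((E (g, ω)) t).2.2) = φ ω := fun _ => rfl
  calc (∑ g : Fin T₀ → P × Fin 3, (∏ t : Fin T₀,
        dec t.1 (fun s => (E (g, ω)) ⟨s.1, s.2.trans t.2⟩) ((E (g, ω)) t).1 *
          (if ((E (g, ω)) t).2.1 = ridx ((E (g, ω)) t).1 then (1:ℝ) else 0)) *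
          φ (fun t => ((E (g, ω)) t).2.2))
      = (∑ g : Fin T₀ → P × Fin 3, (∏ t : Fin T₀,
        dec t.1 (fun s => (E (g, ω)) ⟨s.1, s.2.trans t.2⟩) ((E (g, ω)) t).1 *
          (if ((E (g, ω)) t).2.1 = ridx ((E (g, ω)) t).1 then (1:ℝ) else 0))) * φ ω := by
        rw [Finset.sum_mul]
        exact Finset.sum_congr rfl (fun g _ => by rw [hφ g])
    _ = φ ω := by rw [key, one_mul]

set_option maxHeartbeats 2000000 in
/-- Lemma: the hybrid models `M_{T,0}` rarely hit `B*(T)` and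
are collectively indistinguishable from `M₀`: there is a universal constant
`C > 0` such that whenever `Φ` satisfies Condition 2 and the algorithm interacts
for `T₀ ≤ √N / C` rounds, for each family `i ∈ {1,2}` (encoded by `c : Bool`,
`true ↔ 𝒯₁`):
(a) `E_{T ∼ Unif(𝒯_i)}[ P^{M_{T,0}}( {π^1,…,π^{T₀}} ∩ B*(T) ≠ ∅ ) ] ≤ 2T₀/q + 1/100`;
(b) for every (measurable) set `F` of `T₀`-round histories,
`| P^{M₀}(F) − E_{T ∼ Unif(𝒯_i)}[ P^{M_{T,0}}(F) ] | ≤ 1/100`. -/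

theorem m0_mt0_close :
    ∃ C : ℝ, 0 < C ∧
      ∀ (N n q : ℕ), 0 < N → N % 3 = 0 → 0 < n →
        ∀ ε : ℝ, 0 < ε → ε < 1 → (n : ℝ) = 2 * N / ε → q = n →
        ∀ Φ₁ Φ₂ : Finset (Fin N) → Fin n → Fin q,
          Condition2 N n q Φ₁ Φ₂ →
          ∀ (T₀ : ℕ) (alg : LBAlg (JointDec n q) (LBObs N) T₀), alg.Valid →
            (T₀ : ℝ) ≤ Real.sqrt N / C →
            ∀ c : Bool,
              ((1 / ((Finset.univ.filter fun T : Finset (Fin N) =>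
                    T.card = (if c then N / 3 else 2 * N / 3)).card : ℝ)) *
                  ∑ T ∈ (Finset.univ.filter fun T : Finset (Fin N) =>
                      T.card = (if c then N / 3 else 2 * N / 3)),
                    algProbEvent alg (modelT0 N n q T)
                      {h | ∃ t : Fin T₀, inBstar N n q Φ₁ Φ₂ T (h t).1} ≤
                2 * T₀ / q + 1 / 100) ∧
              (∀ F : Set (Fin T₀ → JointDec n q × LBObs N),
                |algProbEvent alg (model0 N n q) F -
                    (1 / ((Finset.univ.filter fun T : Finset (Fin N) =>
                        T.card = (if c then N / 3 else 2 * N / 3)).card : ℝ)) *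
                      ∑ T ∈ (Finset.univ.filter fun T : Finset (Fin N) =>
                          T.card = (if c then N / 3 else 2 * N / 3)),
                        algProbEvent alg (modelT0 N n q T) F| ≤ 1 / 100) := by
  classical
  refine ⟨20, by norm_num, ?_⟩
  intro N n q hN hN3 hn ε hε0 hε1 hnε hqn Φ₁ Φ₂ hC2 T₀ alg hval hT₀ c
  obtain ⟨m, hmeq, hmval⟩ : ∃ m, (if c then N / 3 else 2 * N / 3) = m ∧
      (m = N / 3 ∨ m = 2 * N / 3) := by
    cases c <;> exact ⟨_, rfl, by simp⟩
  simp only [hmeq]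
  -- basic numeric facts
  have hdvd : 3 ∣ N := Nat.dvd_of_mod_eq_zero hN3
  obtain ⟨a, ha⟩ := hdvd
  have haN3 : N / 3 = a := by omega
  have h2N3 : 2 * N / 3 = 2 * a := by omega
  have ha1 : 1 ≤ a := by omega
  have hmval' : m = a ∨ m = 2 * a := by rcases hmval with h|h <;> omega
  have hm0 : 0 < m := by omega
  have hmN : m ≤ N := by omega
  have ham : a ≤ m := by omega
  have hq0 : 0 < q := hqn ▸ hn
  have hNR : (0:ℝ) < N := by exact_mod_cast hN
  have hmR : (0:ℝ) < m := by exact_mod_cast hm0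
  have hsqrt_nonneg : 0 ≤ Real.sqrt N := Real.sqrt_nonneg _
  have hsqrtN_le : Real.sqrt N ≤ N := by
    have h1N : (1:ℝ) ≤ N := by exact_mod_cast hN
    calc Real.sqrt N ≤ Real.sqrt ((N:ℝ)^2) := Real.sqrt_le_sqrt (by nlinarith)
      _ = N := Real.sqrt_sq (le_of_lt hNR)
  have hT₀sqrt : (T₀:ℝ) ≤ Real.sqrt N := le_trans hT₀ (by linarith)
  have haR : (N:ℝ) = 3 * a := by exact_mod_cast ha
  have hamR : (a:ℝ) ≤ (m:ℝ) := by exact_mod_cast ham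
  have hT₀m : T₀ ≤ m := by
    have h1 : (T₀:ℝ) ≤ (N:ℝ)/20 := le_trans hT₀ (by linarith)
    have h2 : (T₀:ℝ) ≤ (m:ℝ) := by
      have : (N:ℝ)/20 ≤ (a:ℝ) := by
        rw [haR]
        nlinarith [Nat.cast_nonneg (α := ℝ) a]
      linarith
    exact_mod_cast h2
  have hT₀N : T₀ ≤ N := le_trans hT₀m hmN
  have hT₀sq : (T₀:ℝ)^2 ≤ (N:ℝ)/400 := by
    have h1 : (T₀:ℝ)^2 ≤ (Real.sqrt N / 20)^2 := by
      apply pow_le_pow_left₀ (Nat.cast_nonneg T₀) hT₀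
    have h2 : (Real.sqrt N / 20)^2 = (N:ℝ)/400 := by
      rw [div_pow, Real.sq_sqrt (le_of_lt hNR)]
      norm_num
    linarith
  have hNm : (N:ℝ) ≤ 3 * (m:ℝ) := by rw [haR]; linarith
  -- the model class
  set 𝒯 : Finset (Finset (Fin N)) := univ.filter (fun T => T.card = m) with h𝒯
  set K : ℝ := (𝒯.card : ℝ) with hKdef
  have hKchoose : 𝒯.card = N.choose m := card_Tm m
  have hK0 : (0:ℝ) < K := by
    rw [hKdef, hKchoose]
    exact_mod_cast Nat.choose_pos hmN
  have hKinv0 : (0:ℝ) ≤ K⁻¹ := inv_nonneg.mpr hK0.le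
  set μ : ℝ := ((m:ℝ)⁻¹) with hμdef
  have hμ0 : (0:ℝ) ≤ μ := by positivity
  have hμpow : (m:ℝ)^T₀ * μ^T₀ = 1 := by
    rw [hμdef, ← mul_pow, mul_inv_cancel₀ (ne_of_gt hmR), one_pow]
  -- weight of a history (decision randomization × reward indicator)
  set W : (Fin T₀ → JointDec n q × LBObs N) → ℝ := fun h =>
    ∏ t : Fin T₀, alg.dec t.1 (fun s => h ⟨s.1, s.2.trans t.2⟩) (h t).1 *
      (if (h t).2.1 = ridx0 n q (h t).1 then (1:ℝ) else 0) with hWdef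
  have LB : ∀ φ : (Fin T₀ → Fin N) → ℝ,
      (∑ h : Fin T₀ → JointDec n q × LBObs N, W h * φ (fun t => (h t).2.2))
        = ∑ ω : Fin T₀ → Fin N, φ ω := by
    intro φ
    exact sum_W hN T₀ alg.dec (ridx0 n q) hval.1 φ
  have hW0 : ∀ h, 0 ≤ W h := by
    intro h
    apply Finset.prod_nonneg
    intro t _
    apply mul_nonneg ((hval.1 t.1 _).1 _)
    split_ifs <;> norm_num
  -- the observation indicator
  set χ : Finset (Fin N) → (Fin T₀ → Fin N) → ℝ := fun T ω =>
    ∏ t : Fin T₀, (if ω t ∈ T then (1:ℝ) else 0) with hχdef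
  have hχ0 : ∀ T ω, 0 ≤ χ T ω := by
    intro T ω
    apply Finset.prod_nonneg
    intro t _
    split_ifs <;> norm_num
  have hχ : ∀ T (ω : Fin T₀ → Fin N),
      χ T ω = if Finset.image ω univ ⊆ T then (1:ℝ) else 0 := by
    intro T ω
    simp only [hχdef]
    rw [Fintype.prod_boole]
    congr 1
    simp [Finset.image_subset_iff]
  have hχsum : ∀ T ∈ 𝒯, (∑ ω : Fin T₀ → Fin N, χ T ω) = (m:ℝ)^T₀ := by
    intro T hT
    have hTc : T.card = m := (mem_filter.mp hT).2
    simp only [hχdef]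
    calc (∑ ω : Fin T₀ → Fin N, ∏ t : Fin T₀, if ω t ∈ T then (1:ℝ) else 0)
        = (∑ x : Fin N, if x ∈ T then (1:ℝ) else 0)^T₀ :=
          sum_fun_prod T₀ (fun x : Fin N => if x ∈ T then (1:ℝ) else 0)
      _ = (m:ℝ)^T₀ := by
          rw [Finset.sum_boole, Finset.filter_univ_mem, hTc]
  -- decomposition of the history probabilities
  have decompT : ∀ T ∈ 𝒯, ∀ h, algProbHist alg (modelT0 N n q T) h
      = W h * (χ T (fun t => (h t).2.2) * μ ^ T₀) := by
    intro T hT h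
    have hTc : T.card = m := (mem_filter.mp hT).2
    unfold algProbHist modelT0
    have hpt : ∀ t : Fin T₀,
        alg.dec t.1 (fun s => h ⟨s.1, s.2.trans t.2⟩) (h t).1 *
          (if (h t).2.1 = ridx0 n q (h t).1 ∧ (h t).2.2 ∈ T then ((T.card : ℝ))⁻¹ else 0)
        = (alg.dec t.1 (fun s => h ⟨s.1, s.2.trans t.2⟩) (h t).1 *
            (if (h t).2.1 = ridx0 n q (h t).1 then (1:ℝ) else 0)) *
          ((if (h t).2.2 ∈ T then (1:ℝ) else 0) * μ) := by
      intro t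
      rw [hTc, ← hμdef]
      by_cases h1 : (h t).2.1 = ridx0 n q (h t).1 <;>
        by_cases h2 : (h t).2.2 ∈ T <;>
        simp [h1, h2]
    rw [Finset.prod_congr rfl (fun t _ => hpt t), Finset.prod_mul_distrib]
    have hB : (∏ t : Fin T₀, (if (h t).2.2 ∈ T then (1:ℝ) else 0) * μ)
        = χ T (fun t => (h t).2.2) * μ^T₀ := by
      rw [Finset.prod_mul_distrib]
      simp only [hχdef, Finset.prod_const, Finset.card_univ, Fintype.card_fin]
    rw [hB]
  have decomp0 : ∀ h, algProbHist alg (model0 N n q) h = W h * ((N:ℝ)⁻¹) ^ T₀ := by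
    intro h
    unfold algProbHist model0
    have hpt : ∀ t : Fin T₀,
        alg.dec t.1 (fun s => h ⟨s.1, s.2.trans t.2⟩) (h t).1 *
          (if (h t).2.1 = ridx0 n q (h t).1 then ((N : ℝ))⁻¹ else 0)
        = (alg.dec t.1 (fun s => h ⟨s.1, s.2.trans t.2⟩) (h t).1 *
            (if (h t).2.1 = ridx0 n q (h t).1 then (1:ℝ) else 0)) * ((N:ℝ))⁻¹ := by
      intro t
      by_cases h1 : (h t).2.1 = ridx0 n q (h t).1 <;> simp [h1]
    rw [Finset.prod_congr rfl (fun t _ => hpt t), Finset.prod_mul_distrib,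
      Finset.prod_const]
    simp only [hWdef, Finset.card_univ, Fintype.card_fin]
  -- counting facts
  set Inj : Finset (Fin T₀ → Fin N) :=
    univ.filter (fun ω => Function.Injective ω) with hInj
  have hInjcard : Inj.card = N.descFactorial T₀ := by
    have h0 := card_inj_into T₀ (univ : Finset (Fin N))
    rw [Finset.card_univ, Fintype.card_fin] at h0
    rw [hInj, ← h0]
    congr 1
    apply Finset.filter_congr
    intro ω _
    simp
  have hχinj : ∀ T ∈ 𝒯, (∑ ω ∈ Inj, χ T ω) = (m.descFactorial T₀ : ℝ) := by
    intro T hT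
    have hTc : T.card = m := (mem_filter.mp hT).2
    rw [Finset.sum_congr rfl (fun ω _ => hχ T ω), Finset.sum_boole]
    rw [hInj, Finset.filter_filter]
    have : (univ.filter fun ω : Fin T₀ → Fin N =>
        Function.Injective ω ∧ Finset.image ω univ ⊆ T)
        = (univ.filter fun ω : Fin T₀ → Fin N =>
          Function.Injective ω ∧ ∀ t, ω t ∈ T) := by
      apply Finset.filter_congr
      intro ω _
      simp [Finset.image_subset_iff]
    rw [this, card_inj_into, hTc]
  -- the mixture observation weight
  set pp : (Fin T₀ → Fin N) → ℝ := fun ω => K⁻¹ * ∑ T ∈ 𝒯, χ T ω * μ ^ T₀ with hpp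
  have hpp0 : ∀ ω, 0 ≤ pp ω := by
    intro ω
    apply mul_nonneg hKinv0
    apply Finset.sum_nonneg
    intro T _
    exact mul_nonneg (hχ0 T ω) (by positivity)
  have hppsum : (∑ ω : Fin T₀ → Fin N, pp ω) = 1 := by
    have h1 : ∀ T ∈ 𝒯, (∑ ω : Fin T₀ → Fin N, χ T ω * μ ^ T₀) = 1 := by
      intro T hT
      rw [← Finset.sum_mul, hχsum T hT, hμpow]
    calc (∑ ω : Fin T₀ → Fin N, pp ω)
        = K⁻¹ * ∑ ω : Fin T₀ → Fin N, ∑ T ∈ 𝒯, χ T ω * μ ^ T₀ := by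
          simp only [hpp]
          rw [← Finset.mul_sum]
      _ = K⁻¹ * ∑ T ∈ 𝒯, ∑ ω : Fin T₀ → Fin N, χ T ω * μ ^ T₀ := by rw [Finset.sum_comm]
      _ = K⁻¹ * ∑ _T ∈ 𝒯, (1:ℝ) := by rw [Finset.sum_congr rfl h1]
      _ = 1 := by
          rw [Finset.sum_const, nsmul_eq_mul, mul_one, ← hKdef,
            inv_mul_cancel₀ (ne_of_gt hK0)]
  -- event probabilities in decomposed form
  have evT : ∀ T ∈ 𝒯, ∀ F : Set (Fin T₀ → JointDec n q × LBObs N),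
      algProbEvent alg (modelT0 N n q T) F
        = ∑ h : Fin T₀ → JointDec n q × LBObs N,
            (if h ∈ F then (1:ℝ) else 0) * (W h * (χ T (fun t => (h t).2.2) * μ ^ T₀)) := by
    intro T hT F
    unfold algProbEvent
    apply Finset.sum_congr rfl
    intro h _
    rw [decompT T hT h]
    split_ifs <;> simp
  have ev0 : ∀ F : Set (Fin T₀ → JointDec n q × LBObs N),
      algProbEvent alg (model0 N n q) F
        = ∑ h : Fin T₀ → JointDec n q × LBObs N,
            (if h ∈ F then (1:ℝ) else 0) * (W h * ((N:ℝ)⁻¹) ^ T₀) := by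
    intro F
    unfold algProbEvent
    apply Finset.sum_congr rfl
    intro h _
    rw [decomp0 h]
    split_ifs <;> simp
  -- the per-observation-sequence discrepancy
  set D : (Fin T₀ → Fin N) → ℝ := fun ω => ((N:ℝ)⁻¹)^T₀ - pp ω with hDdef
  have hu1 : ((N:ℝ)^T₀) * ((N:ℝ)⁻¹)^T₀ = 1 := by
    rw [← mul_pow, mul_inv_cancel₀ (ne_of_gt hNR), one_pow]
  have hInjU : (∑ _ω ∈ Inj, ((N:ℝ)⁻¹)^T₀) = (N.descFactorial T₀ : ℝ) * ((N:ℝ)⁻¹)^T₀ := by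
    rw [Finset.sum_const, nsmul_eq_mul, hInjcard]
  have hInjP : (∑ ω ∈ Inj, pp ω) = (m.descFactorial T₀ : ℝ) * μ^T₀ := by
    simp only [hpp]
    rw [← Finset.mul_sum, Finset.sum_comm]
    have h1 : ∀ T ∈ 𝒯, (∑ ω ∈ Inj, χ T ω * μ^T₀) = (m.descFactorial T₀:ℝ) * μ^T₀ := by
      intro T hT
      rw [← Finset.sum_mul, hχinj T hT]
    rw [Finset.sum_congr rfl h1, Finset.sum_const, nsmul_eq_mul, ← hKdef, ← mul_assoc,
      inv_mul_cancel₀ (ne_of_gt hK0), one_mul]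
  have hμpowinv : μ^T₀ = ((m:ℝ)^T₀)⁻¹ := by rw [hμdef, inv_pow]
  have hDinjsign : ∀ ω ∈ Inj, 0 ≤ D ω := by
    intro ω hω
    have hinj : Function.Injective ω := by
      have := (mem_filter.mp (hInj ▸ hω)).2
      exact this
    have hS : (Finset.image ω univ).card = T₀ := by
      rw [Finset.card_image_of_injective _ hinj, Finset.card_univ, Fintype.card_fin]
    have hppω : pp ω = K⁻¹ * μ^T₀ * (((N - T₀).choose (m - T₀) : ℕ) : ℝ) := by
      simp only [hpp]
      have h1 : ∀ T ∈ 𝒯, χ T ω * μ^T₀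
          = (if Finset.image ω univ ⊆ T then (1:ℝ) else 0) * μ^T₀ := fun T _ => by rw [hχ]
      rw [Finset.sum_congr rfl h1, ← Finset.sum_mul, Finset.sum_boole]
      rw [h𝒯, Finset.filter_filter]
      have hScard : (Finset.image ω univ).card ≤ m := by rw [hS]; exact hT₀m
      rw [card_supersets m _ hScard, hS]
      ring
    have hC : (((N-T₀).choose (m-T₀) : ℕ) : ℝ) * (N:ℝ)^T₀
        ≤ ((N.choose m : ℕ) : ℝ) * (m:ℝ)^T₀ := by
      have := choose_ratio T₀ N m hT₀m hmN
      exact_mod_cast this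
    have hKval : K = ((N.choose m : ℕ) : ℝ) := by rw [hKdef, hKchoose]
    simp only [hDdef]
    rw [sub_nonneg, hppω]
    have hNpow : (0:ℝ) < (N:ℝ)^T₀ := by positivity
    have hmpow : (0:ℝ) < (m:ℝ)^T₀ := by positivity
    have e1 : K⁻¹ * μ^T₀ * (((N - T₀).choose (m - T₀) : ℕ) : ℝ)
        = (((N - T₀).choose (m - T₀) : ℕ) : ℝ) / (K * (m:ℝ)^T₀) := by
      rw [hμpowinv, div_eq_mul_inv, mul_inv]
      ring
    have e2 : ((N:ℝ)⁻¹)^T₀ = 1 / (N:ℝ)^T₀ := by rw [inv_pow, one_div]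
    rw [e1, e2, div_le_div_iff₀ (mul_pos hK0 hmpow) hNpow, one_mul, hKval]
    exact hC
  have hInjPart : (∑ ω ∈ Inj, |D ω|) ≤ (T₀:ℝ)^2/(2*(m:ℝ)) := by
    rw [Finset.sum_congr rfl (fun ω hω => abs_of_nonneg (hDinjsign ω hω))]
    simp only [hDdef]
    rw [Finset.sum_sub_distrib, hInjU, hInjP]
    have h1 : (N.descFactorial T₀:ℝ) * ((N:ℝ)⁻¹)^T₀ ≤ 1 := by
      have h2 : (N.descFactorial T₀:ℝ) ≤ (N:ℝ)^T₀ := by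
        exact_mod_cast Nat.descFactorial_le_pow N T₀
      calc (N.descFactorial T₀:ℝ) * ((N:ℝ)⁻¹)^T₀
          ≤ (N:ℝ)^T₀ * ((N:ℝ)⁻¹)^T₀ := by
            apply mul_le_mul_of_nonneg_right h2 (by positivity)
        _ = 1 := hu1
    have h2 : 1 - (m.descFactorial T₀ : ℝ) * μ^T₀ ≤ (T₀:ℝ)^2/(2*(m:ℝ)) := by
      have h3 := one_sub_descFac m T₀ hT₀m hm0
      rw [hμdef]
      exact h3
    linarith
  have hsum_split := Finset.sum_filter_add_sum_filter_not univ
    (fun ω : Fin T₀ → Fin N => Function.Injective ω) (fun ω => |D ω|)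
  have htotu : (∑ _ω : Fin T₀ → Fin N, ((N:ℝ)⁻¹)^T₀) = 1 := by
    rw [Finset.sum_const, nsmul_eq_mul, Finset.card_univ]
    have : (Fintype.card (Fin T₀ → Fin N) : ℝ) = (N:ℝ)^T₀ := by
      rw [Fintype.card_fun, Fintype.card_fin, Fintype.card_fin]
      push_cast
      ring
    rw [this, hu1]
  have hNonInjPart : (∑ ω ∈ univ.filter (fun ω : Fin T₀ → Fin N => ¬ Function.Injective ω), |D ω|)
      ≤ (T₀:ℝ)^2/(2*(N:ℝ)) + (T₀:ℝ)^2/(2*(m:ℝ)) := by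
    have hb : ∀ ω, |D ω| ≤ ((N:ℝ)⁻¹)^T₀ + pp ω := by
      intro ω
      simp only [hDdef]
      calc |((N:ℝ)⁻¹)^T₀ - pp ω| ≤ |((N:ℝ)⁻¹)^T₀| + |pp ω| := abs_sub _ _
        _ = ((N:ℝ)⁻¹)^T₀ + pp ω := by
            rw [abs_of_nonneg (by positivity : (0:ℝ) ≤ ((N:ℝ)⁻¹)^T₀), abs_of_nonneg (hpp0 ω)]
    have hsplitu := Finset.sum_filter_add_sum_filter_not univ
      (fun ω : Fin T₀ → Fin N => Function.Injective ω) (fun _ω => ((N:ℝ)⁻¹)^T₀)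
    have hsplitp := Finset.sum_filter_add_sum_filter_not univ
      (fun ω : Fin T₀ → Fin N => Function.Injective ω) (fun ω => pp ω)
    have hu2 : (∑ _ω ∈ univ.filter (fun ω : Fin T₀ → Fin N => ¬ Function.Injective ω),
        ((N:ℝ)⁻¹)^T₀) ≤ (T₀:ℝ)^2/(2*(N:ℝ)) := by
      have h4 := one_sub_descFac N T₀ hT₀N hN
      have h5 : (∑ _ω ∈ univ.filter (fun ω : Fin T₀ → Fin N => Function.Injective ω),
          ((N:ℝ)⁻¹)^T₀) = (N.descFactorial T₀ : ℝ) * ((N:ℝ)⁻¹)^T₀ := by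
        rw [← hInj]
        exact hInjU
      linarith [hsplitu, htotu]
    have hp2 : (∑ ω ∈ univ.filter (fun ω : Fin T₀ → Fin N => ¬ Function.Injective ω),
        pp ω) ≤ (T₀:ℝ)^2/(2*(m:ℝ)) := by
      have h4 := one_sub_descFac m T₀ hT₀m hm0
      rw [← hμdef] at h4
      have h5 : (∑ ω ∈ univ.filter (fun ω : Fin T₀ → Fin N => Function.Injective ω),
          pp ω) = (m.descFactorial T₀ : ℝ) * μ^T₀ := by
        rw [← hInj]
        exact hInjP
      linarith [hsplitp, hppsum]
    calc (∑ ω ∈ univ.filter (fun ω : Fin T₀ → Fin N => ¬ Function.Injective ω), |D ω|)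
        ≤ ∑ ω ∈ univ.filter (fun ω : Fin T₀ → Fin N => ¬ Function.Injective ω),
            (((N:ℝ)⁻¹)^T₀ + pp ω) := Finset.sum_le_sum (fun ω _ => hb ω)
      _ = (∑ _ω ∈ univ.filter (fun ω : Fin T₀ → Fin N => ¬ Function.Injective ω),
            ((N:ℝ)⁻¹)^T₀)
          + ∑ ω ∈ univ.filter (fun ω : Fin T₀ → Fin N => ¬ Function.Injective ω), pp ω :=
          Finset.sum_add_distrib
      _ ≤ (T₀:ℝ)^2/(2*(N:ℝ)) + (T₀:ℝ)^2/(2*(m:ℝ)) := add_le_add hu2 hp2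
  have hDsum : (∑ ω : Fin T₀ → Fin N, |D ω|) ≤ 1/100 := by
    have e1 : (T₀:ℝ)^2/(2*(m:ℝ)) ≤ 3/800 := by
      rw [div_le_div_iff₀ (by linarith : (0:ℝ) < 2*(m:ℝ)) (by norm_num : (0:ℝ) < 800)]
      linarith
    have e2 : (T₀:ℝ)^2/(2*(N:ℝ)) ≤ 1/800 := by
      rw [div_le_div_iff₀ (by linarith : (0:ℝ) < 2*(N:ℝ)) (by norm_num : (0:ℝ) < 800)]
      linarith
    have hIJ : (∑ ω ∈ Inj, |D ω|)
        = ∑ ω ∈ univ.filter (fun ω : Fin T₀ → Fin N => Function.Injective ω), |D ω| := by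
      rw [hInj]
    linarith [hsum_split, hInjPart, hNonInjPart]
  -- Part (b)
  have partb : ∀ F : Set (Fin T₀ → JointDec n q × LBObs N),
      |algProbEvent alg (model0 N n q) F -
        K⁻¹ * ∑ T ∈ 𝒯, algProbEvent alg (modelT0 N n q T) F| ≤ 1/100 := by
    intro F
    have e1 : (K⁻¹ * ∑ T ∈ 𝒯, algProbEvent alg (modelT0 N n q T) F)
        = ∑ h : Fin T₀ → JointDec n q × LBObs N,
            (if h ∈ F then (1:ℝ) else 0) * (W h * pp (fun t => (h t).2.2)) := by
      rw [Finset.sum_congr rfl (fun T hT => evT T hT F), Finset.sum_comm, Finset.mul_sum]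
      apply Finset.sum_congr rfl
      intro h _
      simp only [hpp]
      rw [Finset.mul_sum, Finset.mul_sum, Finset.mul_sum, Finset.mul_sum]
      apply Finset.sum_congr rfl
      intro T _
      ring
    have hdiff : algProbEvent alg (model0 N n q) F -
        K⁻¹ * ∑ T ∈ 𝒯, algProbEvent alg (modelT0 N n q T) F
        = ∑ h : Fin T₀ → JointDec n q × LBObs N,
            (if h ∈ F then (1:ℝ) else 0) * (W h * D (fun t => (h t).2.2)) := by
      rw [ev0 F, e1, ← Finset.sum_sub_distrib]
      apply Finset.sum_congr rfl
      intro h _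
      simp only [hDdef]
      ring
    rw [hdiff]
    calc |∑ h : Fin T₀ → JointDec n q × LBObs N,
          (if h ∈ F then (1:ℝ) else 0) * (W h * D (fun t => (h t).2.2))|
        ≤ ∑ h : Fin T₀ → JointDec n q × LBObs N,
          |(if h ∈ F then (1:ℝ) else 0) * (W h * D (fun t => (h t).2.2))| :=
          Finset.abs_sum_le_sum_abs _ _
      _ ≤ ∑ h : Fin T₀ → JointDec n q × LBObs N, W h * |D (fun t => (h t).2.2)| := by
          apply Finset.sum_le_sum
          intro h _
          rw [abs_mul, abs_mul, abs_of_nonneg (hW0 h)]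
          calc |if h ∈ F then (1:ℝ) else 0| * (W h * |D (fun t => (h t).2.2)|)
              ≤ 1 * (W h * |D (fun t => (h t).2.2)|) := by
                apply mul_le_mul_of_nonneg_right _
                  (mul_nonneg (hW0 h) (abs_nonneg _))
                split_ifs <;> simp
            _ = W h * |D (fun t => (h t).2.2)| := one_mul _
      _ = ∑ ω : Fin T₀ → Fin N, |D ω| := LB (fun ω => |D ω|)
      _ ≤ 1/100 := hDsum
  -- nonnegativity of history probabilities
  have hρ0 : ∀ (T : Finset (Fin N)) h, 0 ≤ algProbHist alg (modelT0 N n q T) h := by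
    intro T h
    unfold algProbHist
    apply Finset.prod_nonneg
    intro t _
    apply mul_nonneg ((hval.1 t.1 _).1 _)
    unfold modelT0
    split_ifs
    · exact inv_nonneg.mpr (Nat.cast_nonneg _)
    · exact le_refl _
  -- the counting bound from Condition 2
  have hG : ∀ (π : JointDec n q) (Q : Finset (Fin N)), (Q.card:ℝ) ≤ Real.sqrt N →
      ((univ.filter fun T : Finset (Fin N) =>
        T.card = m ∧ Q ⊆ T ∧ inBstar N n q Φ₁ Φ₂ T π).card : ℝ)
      ≤ (2/(q:ℝ)) * ((univ.filter fun T : Finset (Fin N) =>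
        T.card = m ∧ Q ⊆ T).card : ℝ) := by
    intro π Q hQ
    have hq2 : (0:ℝ) ≤ 2/(q:ℝ) := by positivity
    rcases hmval with hm1 | hm2
    · -- 𝒯₁ branch
      rw [hm1]
      by_cases hd : (π.1 : ℕ) < n ∧ ∃ a₂ : Fin q, (π.2 : ℕ) = (a₂ : ℕ) + 1
      · obtain ⟨h1, a₂, h2⟩ := hd
        have hsub : (univ.filter fun T : Finset (Fin N) =>
            T.card = N/3 ∧ Q ⊆ T ∧ inBstar N n q Φ₁ Φ₂ T π)
            ⊆ (univ.filter fun T : Finset (Fin N) =>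
              T.card = N/3 ∧ Q ⊆ T ∧ Φ₁ T ⟨(π.1:ℕ), h1⟩ = a₂) := by
          intro T hT
          simp only [mem_filter, mem_univ, true_and] at hT ⊢
          obtain ⟨hc1, hc2, hc3⟩ := hT
          refine ⟨hc1, hc2, ?_⟩
          unfold inBstar at hc3
          rw [if_pos hc1] at hc3
          obtain ⟨i, hi1, hi2⟩ := hc3
          have hieq : i = (⟨(π.1:ℕ), h1⟩ : Fin n) := Fin.ext hi1.symm
          subst hieq
          apply Fin.ext
          omega
        calc ((univ.filter fun T : Finset (Fin N) =>
              T.card = N/3 ∧ Q ⊆ T ∧ inBstar N n q Φ₁ Φ₂ T π).card : ℝ)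
            ≤ ((univ.filter fun T : Finset (Fin N) =>
              T.card = N/3 ∧ Q ⊆ T ∧ Φ₁ T ⟨(π.1:ℕ), h1⟩ = a₂).card : ℝ) := by
              exact_mod_cast Finset.card_le_card hsub
          _ ≤ (2/(q:ℝ)) * ((univ.filter fun T : Finset (Fin N) =>
              T.card = N/3 ∧ Q ⊆ T).card : ℝ) := hC2.1 Q hQ _ a₂
      · have hempty : (univ.filter fun T : Finset (Fin N) =>
            T.card = N/3 ∧ Q ⊆ T ∧ inBstar N n q Φ₁ Φ₂ T π) = ∅ := by
          rw [Finset.filter_eq_empty_iff]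
          intro T _
          rintro ⟨hc1, hc2, hc3⟩
          unfold inBstar at hc3
          rw [if_pos hc1] at hc3
          obtain ⟨i, hi1, hi2⟩ := hc3
          exact hd ⟨by omega, ⟨Φ₁ T i, by omega⟩⟩
        rw [hempty]
        simp only [Finset.card_empty, Nat.cast_zero]
        exact mul_nonneg hq2 (Nat.cast_nonneg _)
    · -- 𝒯₂ branch
      rw [hm2]
      by_cases hd : (n ≤ (π.1 : ℕ)) ∧ ∃ a₂ : Fin q, (π.2 : ℕ) = q + 1 + (a₂ : ℕ)
      · obtain ⟨h1, a₂, h2⟩ := hd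
        have hπ1 : (π.1:ℕ) < 2*n := π.1.2
        have hi1n : (π.1:ℕ) - n < n := by omega
        have hsub : (univ.filter fun T : Finset (Fin N) =>
            T.card = 2*N/3 ∧ Q ⊆ T ∧ inBstar N n q Φ₁ Φ₂ T π)
            ⊆ (univ.filter fun T : Finset (Fin N) =>
              T.card = 2*N/3 ∧ Q ⊆ T ∧ Φ₂ T ⟨(π.1:ℕ) - n, hi1n⟩ = a₂) := by
          intro T hT
          simp only [mem_filter, mem_univ, true_and] at hT ⊢
          obtain ⟨hc1, hc2, hc3⟩ := hT
          refine ⟨hc1, hc2, ?_⟩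
          unfold inBstar at hc3
          rw [if_neg (by omega : ¬ T.card = N/3)] at hc3
          obtain ⟨i, hi1, hi2⟩ := hc3
          have hieq : i = (⟨(π.1:ℕ) - n, hi1n⟩ : Fin n) := Fin.ext (by show (i:ℕ) = (π.1:ℕ) - n; omega)
          subst hieq
          apply Fin.ext
          omega
        calc ((univ.filter fun T : Finset (Fin N) =>
              T.card = 2*N/3 ∧ Q ⊆ T ∧ inBstar N n q Φ₁ Φ₂ T π).card : ℝ)
            ≤ ((univ.filter fun T : Finset (Fin N) =>
              T.card = 2*N/3 ∧ Q ⊆ T ∧ Φ₂ T ⟨(π.1:ℕ) - n, hi1n⟩ = a₂).card : ℝ) := by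
              exact_mod_cast Finset.card_le_card hsub
          _ ≤ (2/(q:ℝ)) * ((univ.filter fun T : Finset (Fin N) =>
              T.card = 2*N/3 ∧ Q ⊆ T).card : ℝ) := hC2.2 Q hQ _ a₂
      · have hempty : (univ.filter fun T : Finset (Fin N) =>
            T.card = 2*N/3 ∧ Q ⊆ T ∧ inBstar N n q Φ₁ Φ₂ T π) = ∅ := by
          rw [Finset.filter_eq_empty_iff]
          intro T _
          rintro ⟨hc1, hc2, hc3⟩
          unfold inBstar at hc3
          rw [if_neg (by omega : ¬ T.card = N/3)] at hc3
          obtain ⟨i, hi1, hi2⟩ := hc3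
          have hin : (i:ℕ) < n := i.2
          exact hd ⟨by omega, ⟨Φ₂ T i, by omega⟩⟩
        rw [hempty]
        simp only [Finset.card_empty, Nat.cast_zero]
        exact mul_nonneg hq2 (Nat.cast_nonneg _)
  -- union bound over the rounds
  have hhitT : ∀ T ∈ 𝒯,
      algProbEvent alg (modelT0 N n q T)
        {h | ∃ t : Fin T₀, inBstar N n q Φ₁ Φ₂ T (h t).1}
      ≤ ∑ t : Fin T₀, ∑ h : Fin T₀ → JointDec n q × LBObs N,
          (if inBstar N n q Φ₁ Φ₂ T (h t).1 then (1:ℝ) else 0) *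
            algProbHist alg (modelT0 N n q T) h := by
    intro T _
    unfold algProbEvent
    rw [Finset.sum_comm]
    apply Finset.sum_le_sum
    intro h _
    by_cases hE : h ∈ {h : Fin T₀ → JointDec n q × LBObs N |
        ∃ t : Fin T₀, inBstar N n q Φ₁ Φ₂ T (h t).1}
    · rw [if_pos hE]
      obtain ⟨t₀, ht₀⟩ := hE
      calc algProbHist alg (modelT0 N n q T) h
          = (if inBstar N n q Φ₁ Φ₂ T (h t₀).1 then (1:ℝ) else 0) *
              algProbHist alg (modelT0 N n q T) h := by rw [if_pos ht₀, one_mul]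
        _ ≤ ∑ t : Fin T₀, (if inBstar N n q Φ₁ Φ₂ T (h t).1 then (1:ℝ) else 0) *
              algProbHist alg (modelT0 N n q T) h := by
            apply Finset.single_le_sum
              (f := fun t : Fin T₀ => (if inBstar N n q Φ₁ Φ₂ T (h t).1 then (1:ℝ) else 0) *
                algProbHist alg (modelT0 N n q T) h) _ (mem_univ t₀)
            intro t _
            apply mul_nonneg _ (hρ0 T h)
            split_ifs <;> norm_num
    · rw [if_neg hE]
      apply Finset.sum_nonneg
      intro t _
      apply mul_nonneg _ (hρ0 T h)
      split_ifs <;> norm_num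
  -- relating the superset count to the mixture weight
  have hcardpp : ∀ ω : Fin T₀ → Fin N,
      K⁻¹ * (μ^T₀ * ((univ.filter fun T : Finset (Fin N) =>
        T.card = m ∧ Finset.image ω univ ⊆ T).card : ℝ)) = pp ω := by
    intro ω
    simp only [hpp]
    have h1 : ∀ T ∈ 𝒯, χ T ω * μ^T₀
        = (if Finset.image ω univ ⊆ T then (1:ℝ) else 0) * μ^T₀ := fun T _ => by rw [hχ]
    rw [Finset.sum_congr rfl h1, ← Finset.sum_mul, Finset.sum_boole, h𝒯,
      Finset.filter_filter]
    ring
  -- the per-round bound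
  have hstep : ∀ t : Fin T₀,
      K⁻¹ * ∑ T ∈ 𝒯, (∑ h : Fin T₀ → JointDec n q × LBObs N,
        (if inBstar N n q Φ₁ Φ₂ T (h t).1 then (1:ℝ) else 0) *
          algProbHist alg (modelT0 N n q T) h) ≤ 2/(q:ℝ) := by
    intro t
    have ea : (∑ T ∈ 𝒯, ∑ h : Fin T₀ → JointDec n q × LBObs N,
        (if inBstar N n q Φ₁ Φ₂ T (h t).1 then (1:ℝ) else 0) *
          algProbHist alg (modelT0 N n q T) h)
        = ∑ h : Fin T₀ → JointDec n q × LBObs N, ∑ T ∈ 𝒯,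
          (if inBstar N n q Φ₁ Φ₂ T (h t).1 then (1:ℝ) else 0) *
            (W h * (χ T (fun s => (h s).2.2) * μ ^ T₀)) := by
      rw [Finset.sum_comm]
      apply Finset.sum_congr rfl
      intro h _
      apply Finset.sum_congr rfl
      intro T hT
      rw [decompT T hT h]
    calc K⁻¹ * ∑ T ∈ 𝒯, (∑ h : Fin T₀ → JointDec n q × LBObs N,
          (if inBstar N n q Φ₁ Φ₂ T (h t).1 then (1:ℝ) else 0) *
            algProbHist alg (modelT0 N n q T) h)
        = ∑ h : Fin T₀ → JointDec n q × LBObs N, K⁻¹ * ∑ T ∈ 𝒯,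
            (if inBstar N n q Φ₁ Φ₂ T (h t).1 then (1:ℝ) else 0) *
              (W h * (χ T (fun s => (h s).2.2) * μ ^ T₀)) := by
          rw [ea, Finset.mul_sum]
      _ ≤ ∑ h : Fin T₀ → JointDec n q × LBObs N,
            W h * ((2/(q:ℝ)) * pp (fun s => (h s).2.2)) := by
          apply Finset.sum_le_sum
          intro h _
          have h3 : ∀ T ∈ 𝒯, (if inBstar N n q Φ₁ Φ₂ T (h t).1 then (1:ℝ) else 0) *
              (W h * (χ T (fun s => (h s).2.2) * μ ^ T₀))
              = (W h * μ^T₀) * (if Finset.image (fun s => (h s).2.2) univ ⊆ T ∧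
                  inBstar N n q Φ₁ Φ₂ T (h t).1 then (1:ℝ) else 0) := by
            intro T _
            rw [hχ]
            by_cases hA : inBstar N n q Φ₁ Φ₂ T (h t).1 <;>
              by_cases hB : Finset.image (fun s => (h s).2.2) univ ⊆ T <;>
              simp [hA, hB]
          have e2 : (K⁻¹ * ∑ T ∈ 𝒯,
              (if inBstar N n q Φ₁ Φ₂ T (h t).1 then (1:ℝ) else 0) *
                (W h * (χ T (fun s => (h s).2.2) * μ ^ T₀)))
              = W h * (K⁻¹ * (μ^T₀ * ((univ.filter fun T : Finset (Fin N) =>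
                  T.card = m ∧ (Finset.image (fun s => (h s).2.2) univ ⊆ T ∧
                    inBstar N n q Φ₁ Φ₂ T (h t).1)).card : ℝ))) := by
            rw [Finset.sum_congr rfl h3, ← Finset.mul_sum, Finset.sum_boole, h𝒯,
              Finset.filter_filter]
            ring
          rw [e2]
          apply mul_le_mul_of_nonneg_left _ (hW0 h)
          have hQb : (((Finset.image (fun s => (h s).2.2) univ).card : ℕ) : ℝ)
              ≤ Real.sqrt N := by
            have hc1 : (Finset.image (fun s => (h s).2.2) univ).card ≤ T₀ := by
              calc (Finset.image (fun s => (h s).2.2) univ).card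
                  ≤ (univ : Finset (Fin T₀)).card := Finset.card_image_le
                _ = T₀ := by rw [Finset.card_univ, Fintype.card_fin]
            calc (((Finset.image (fun s => (h s).2.2) univ).card : ℕ) : ℝ)
                ≤ (T₀:ℝ) := by exact_mod_cast hc1
              _ ≤ Real.sqrt N := hT₀sqrt
          have h4 := hG ((h t).1) (Finset.image (fun s => (h s).2.2) univ) hQb
          have h5 := hcardpp (fun s => (h s).2.2)
          calc K⁻¹ * (μ^T₀ * ((univ.filter fun T : Finset (Fin N) =>
                T.card = m ∧ (Finset.image (fun s => (h s).2.2) univ ⊆ T ∧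
                  inBstar N n q Φ₁ Φ₂ T (h t).1)).card : ℝ))
              ≤ K⁻¹ * (μ^T₀ * ((2/(q:ℝ)) * ((univ.filter fun T : Finset (Fin N) =>
                  T.card = m ∧ Finset.image (fun s => (h s).2.2) univ ⊆ T).card : ℝ))) := by
                apply mul_le_mul_of_nonneg_left _ hKinv0
                apply mul_le_mul_of_nonneg_left _ (by positivity : (0:ℝ) ≤ μ^T₀)
                exact h4
            _ = (2/(q:ℝ)) * (K⁻¹ * (μ^T₀ * ((univ.filter fun T : Finset (Fin N) =>
                  T.card = m ∧ Finset.image (fun s => (h s).2.2) univ ⊆ T).card : ℝ))) := by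
                ring
            _ = (2/(q:ℝ)) * pp (fun s => (h s).2.2) := by rw [h5]
      _ = ∑ ω : Fin T₀ → Fin N, (2/(q:ℝ)) * pp ω := LB (fun ω => (2/(q:ℝ)) * pp ω)
      _ = 2/(q:ℝ) := by rw [← Finset.mul_sum, hppsum, mul_one]
  -- conclude
  constructor
  · -- part (a)
    rw [one_div]
    have hub : (∑ T ∈ 𝒯, algProbEvent alg (modelT0 N n q T)
        {h | ∃ t : Fin T₀, inBstar N n q Φ₁ Φ₂ T (h t).1})
        ≤ ∑ T ∈ 𝒯, ∑ t : Fin T₀, ∑ h : Fin T₀ → JointDec n q × LBObs N,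
          (if inBstar N n q Φ₁ Φ₂ T (h t).1 then (1:ℝ) else 0) *
            algProbHist alg (modelT0 N n q T) h := Finset.sum_le_sum hhitT
    calc K⁻¹ * ∑ T ∈ 𝒯, algProbEvent alg (modelT0 N n q T)
          {h | ∃ t : Fin T₀, inBstar N n q Φ₁ Φ₂ T (h t).1}
        ≤ K⁻¹ * ∑ T ∈ 𝒯, ∑ t : Fin T₀, ∑ h : Fin T₀ → JointDec n q × LBObs N,
            (if inBstar N n q Φ₁ Φ₂ T (h t).1 then (1:ℝ) else 0) *
              algProbHist alg (modelT0 N n q T) h :=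
          mul_le_mul_of_nonneg_left hub hKinv0
      _ = ∑ t : Fin T₀, K⁻¹ * ∑ T ∈ 𝒯, ∑ h : Fin T₀ → JointDec n q × LBObs N,
            (if inBstar N n q Φ₁ Φ₂ T (h t).1 then (1:ℝ) else 0) *
              algProbHist alg (modelT0 N n q T) h := by
          rw [Finset.sum_comm, Finset.mul_sum]
      _ ≤ ∑ _t : Fin T₀, 2/(q:ℝ) := Finset.sum_le_sum (fun t _ => hstep t)
      _ = (T₀:ℝ) * (2/(q:ℝ)) := by
          rw [Finset.sum_const, Finset.card_univ, Fintype.card_fin, nsmul_eq_mul]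
      _ ≤ 2 * (T₀:ℝ) / (q:ℝ) + 1/100 := by
          have he : (T₀:ℝ) * (2/(q:ℝ)) = 2 * (T₀:ℝ) / (q:ℝ) := by ring
          rw [he]
          linarith
  · -- part (b)
    intro F
    rw [one_div]
    exact partb F
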